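/- There exists an absolute constant c > 0 such that for every centered log-concave probability measure μ on ℝⁿ and every real p with 1 ≤ p ≤ n−1, I_{−p}(μ) ≥ c·√n / ‖μ‖_∞^{1/n}, where ‖μ‖_∞ = ‖f_μ‖_∞; in particular, for isotropic μ, I_{−p}(μ) ≥ c·√n / L_μ. -/

import Mathlib

open MeasureTheory Module Submodule
open scoped Pointwise ENNReal RealInnerProductSpace NNReal

noncomputable section

abbrev Euc (n : ℕ) : Type := EuclideanSpace ℝ (Fin n)

def IsLogConcave {n : ℕ} (μ : Measure (Euc n)) : Prop :=
  ∀ A B : Set (Euc n), MeasurableSet A → MeasurableSet B →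
    ∀ t : ℝ, 0 < t → t < 1 →
      μ A ^ t * μ B ^ (1 - t) ≤ μ (t • A + (1 - t) • B)

def IsCenteredM {n : ℕ} (μ : Measure (Euc n)) : Prop :=
  (∫ x, x ∂μ) = 0

def covM {n : ℕ} (μ : Measure (Euc n)) : Matrix (Fin n) (Fin n) ℝ :=
  Matrix.of fun i j => (∫ x, x i * x j ∂μ) - (∫ x, x i ∂μ) * (∫ x, x j ∂μ)

def IsIsotropicLC {n : ℕ} (μ : Measure (Euc n)) : Prop :=
  IsProbabilityMeasure μ ∧ IsCenteredM μ ∧ IsLogConcave μ ∧ covM μ = 1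

def densitySup {n : ℕ} (μ : Measure (Euc n)) : ℝ≥0∞ :=
  essSup (μ.rnDeriv volume) volume

def isoConst {n : ℕ} (μ : Measure (Euc n)) : ℝ :=
  (densitySup μ).toReal ^ ((n : ℝ)⁻¹)

def Lconst (n : ℕ) : ℝ :=
  sSup {L : ℝ | ∃ μ : Measure (Euc n), IsIsotropicLC μ ∧ L = isoConst μ}

def marg {n : ℕ} (μ : Measure (Euc n)) (E : Submodule ℝ (Euc n)) :
    Measure (Euc (finrank ℝ E)) :=
  Measure.map (fun x => (stdOrthonormalBasis ℝ E).repr (orthogonalProjection E x)) μ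

def Iq {n : ℕ} (μ : Measure (Euc n)) (q : ℝ) : ℝ :=
  (∫ x, ‖x‖ ^ q ∂μ) ^ q⁻¹

def qminusc {m : ℕ} (μ : Measure (Euc m)) (δ : ℝ) : ℝ :=
  if m = 1 then 1
  else sSup {p : ℝ | 1 ≤ p ∧ p ≤ (m : ℝ) - 1 ∧ δ⁻¹ * Real.sqrt m ≤ Iq μ (-p)}

def qminuscH {n : ℕ} (μ : Measure (Euc n)) (δ : ℝ) : ℝ :=
  (n : ℝ) * sInf {r : ℝ | ∃ E : Submodule ℝ (Euc n), 1 ≤ finrank ℝ E ∧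
    r = (⌊qminusc (marg μ E) δ⌋ : ℝ) / (finrank ℝ E : ℝ)}

def rsharp {m : ℕ} (μ : Measure (Euc m)) (A : ℝ) : ℕ :=
  if m = 1 then 1
  else sSup {s : ℕ | 1 ≤ s ∧ s ≤ m - 1 ∧
    ∃ F : Submodule ℝ (Euc m), finrank ℝ F = s ∧ isoConst (marg μ F) ≤ A}

def rsharpH {n : ℕ} (μ : Measure (Euc n)) (A : ℝ) : ℝ :=
  (n : ℝ) * sInf {r : ℝ | ∃ E : Submodule ℝ (Euc n), 1 ≤ finrank ℝ E ∧
    r = (rsharp (marg μ E) A : ℝ) / (finrank ℝ E : ℝ)}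

def centroidBody {m : ℕ} (μ : Measure (Euc m)) (p : ℝ) : Set (Euc m) :=
  {z | ∀ y : Euc m, ⟪z, y⟫ ≤ (∫ x, |⟪x, y⟫| ^ p ∂μ) ^ p⁻¹}

def centroidVol {m : ℕ} (μ : Measure (Euc m)) (p : ℝ) : ℝ :=
  (volume (centroidBody μ p)).toReal ^ ((m : ℝ)⁻¹)

def lapInt {m : ℕ} (μ : Measure (Euc m)) (ξ : Euc m) : ℝ≥0∞ :=
  ∫⁻ x, ENNReal.ofReal (Real.exp ⟪x, ξ⟫) ∂μ

def LambdaBody {m : ℕ} (μ : Measure (Euc m)) (p : ℝ) : Set (Euc m) :=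
  {x | lapInt μ x ≤ ENNReal.ofReal (Real.exp p) ∧ lapInt μ (-x) ≤ ENNReal.ofReal (Real.exp p)}

def tiltedM {m : ℕ} (μ : Measure (Euc m)) (x : Euc m) : Measure (Euc m) :=
  μ.tilted fun z => ⟪z, x⟫

def centeredTilt {m : ℕ} (μ : Measure (Euc m)) (x : Euc m) : Measure (Euc m) :=
  Measure.map (fun z => z - ∫ w, w ∂(tiltedM μ x)) (tiltedM μ x)

def stdGaussianE (n : ℕ) : Measure (Euc n) :=
  Measure.map (⇑(EuclideanSpace.equiv (Fin n) ℝ).symm)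
    (Measure.pi fun _ : Fin n => ProbabilityTheory.gaussianReal 0 1)

lemma euc_ball_vol {n : ℕ} (hn : 0 < n) {s : ℝ} (hs : 0 < s) :
    volume (Metric.closedBall (0 : Euc n) s) ≤ ENNReal.ofReal ((5 / Real.sqrt n * s) ^ n) := by
  have hrn : (0:ℝ) < n := Nat.cast_pos.2 hn
  set b : ℝ := n / (2 * s ^ 2) with hb_def
  have hb : 0 < b := by positivity
  have hci : Integrable (fun v : Euc n => Complex.exp (-(b:ℂ) * ‖v‖ ^ 2)) := by
    simpa using GaussianFourier.integrable_cexp_neg_mul_sq_norm_add (by simpa using hb) 0 (0 : Euc n)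
  have hre : ∀ v : Euc n, (Complex.exp (-(b:ℂ) * ‖v‖ ^ 2)).re = Real.exp (-b * ‖v‖ ^ 2) := by
    intro v
    rw [show -(b:ℂ) * ‖v‖ ^ 2 = ((-b * ‖v‖ ^ 2 : ℝ) : ℂ) by push_cast; ring]
    exact Complex.exp_ofReal_re _
  have hri : Integrable (fun v : Euc n => Real.exp (-b * ‖v‖ ^ 2)) := by
    simpa [← neg_mul, hre] using hci.re
  have hint : ∫ v : Euc n, Real.exp (-b * ‖v‖ ^ 2) = (Real.pi / b) ^ ((n : ℝ) / 2) := by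
    rw [GaussianFourier.integral_rexp_neg_mul_sq_norm hb]
    simp [finrank_euclideanSpace_fin]
  have hvol_ne : volume (Metric.closedBall (0 : Euc n) s) ≠ ∞ := measure_closedBall_lt_top.ne
  have key : (volume (Metric.closedBall (0 : Euc n) s)).toReal
      ≤ Real.exp ((n:ℝ)/2) * (Real.pi / b) ^ ((n:ℝ)/2) := by
    have h1 : (volume (Metric.closedBall (0 : Euc n) s)).toReal
        = ∫ _x in Metric.closedBall (0 : Euc n) s, (1:ℝ) := by
      simp
      rfl
    have h2 : ∀ x ∈ Metric.closedBall (0 : Euc n) s,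
        (1:ℝ) ≤ Real.exp ((n:ℝ)/2) * Real.exp (-b * ‖x‖ ^ 2) := by
      intro x hx
      rw [← Real.exp_add]
      have hx' : ‖x‖ ≤ s := by simpa using hx
      have hx2 : ‖x‖ ^ 2 ≤ s ^ 2 := by nlinarith [norm_nonneg x]
      have hb2 : b * ‖x‖ ^ 2 ≤ (n:ℝ)/2 := by
        have : b * ‖x‖ ^ 2 ≤ b * s ^ 2 := by nlinarith
        have hbs : b * s ^ 2 = (n:ℝ)/2 := by
          rw [hb_def]; field_simp
        linarith
      have h0 : (0:ℝ) ≤ (n:ℝ)/2 + -b * ‖x‖ ^ 2 := by nlinarith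
      exact Real.one_le_exp h0
    have h3 : (∫ _x in Metric.closedBall (0 : Euc n) s, (1:ℝ))
        ≤ ∫ x in Metric.closedBall (0 : Euc n) s, Real.exp ((n:ℝ)/2) * Real.exp (-b * ‖x‖ ^ 2) := by
      refine setIntegral_mono_on (integrableOn_const measure_closedBall_lt_top.ne)
        ((hri.const_mul _).integrableOn) measurableSet_closedBall h2
    have h4 : (∫ x in Metric.closedBall (0 : Euc n) s, Real.exp ((n:ℝ)/2) * Real.exp (-b * ‖x‖ ^ 2))
        ≤ ∫ x : Euc n, Real.exp ((n:ℝ)/2) * Real.exp (-b * ‖x‖ ^ 2) :=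
      setIntegral_le_integral (hri.const_mul _)
        (Filter.Eventually.of_forall fun x => by positivity)
    rw [h1]
    calc (∫ _x in Metric.closedBall (0 : Euc n) s, (1:ℝ)) ≤ _ := h3.trans h4
    _ = Real.exp ((n:ℝ)/2) * (Real.pi / b) ^ ((n:ℝ)/2) := by
        rw [integral_const_mul, hint]
  have hX : (0:ℝ) ≤ 5 / Real.sqrt n * s := by positivity
  have hfinal : Real.exp ((n:ℝ)/2) * (Real.pi / b) ^ ((n:ℝ)/2) ≤ (5 / Real.sqrt n * s) ^ n := by
    have hpb : Real.pi / b = 2 * Real.pi * s ^ 2 / n := by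
      rw [hb_def]; field_simp
    have he : Real.exp ((n:ℝ)/2) = Real.exp 1 ^ ((n:ℝ)/2) := (Real.exp_one_rpow _).symm
    rw [hpb, he, ← Real.mul_rpow (Real.exp_pos 1).le (by positivity)]
    have hbase : Real.exp 1 * (2 * Real.pi * s ^ 2 / n) ≤ (5 / Real.sqrt n * s) ^ 2 := by
      have h25 : (5 / Real.sqrt n * s) ^ 2 = 25 * s ^ 2 / n := by
        have : Real.sqrt n ^ 2 = (n:ℝ) := Real.sq_sqrt hrn.le
        field_simp
        nlinarith [this]
      rw [h25]
      have hpi : Real.pi < 3.15 := Real.pi_lt_d2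
      have hexp : Real.exp 1 < 2.7182818286 := Real.exp_one_lt_d9
      have hq : (0:ℝ) ≤ s ^ 2 / n := by positivity
      have h2pe : Real.exp 1 * (2 * Real.pi) ≤ 25 := by nlinarith [Real.exp_pos 1, Real.pi_pos]
      calc Real.exp 1 * (2 * Real.pi * s ^ 2 / ↑n)
          = (Real.exp 1 * (2 * Real.pi)) * (s ^ 2 / ↑n) := by ring
        _ ≤ 25 * (s ^ 2 / ↑n) := mul_le_mul_of_nonneg_right h2pe hq
        _ = 25 * s ^ 2 / ↑n := by ring
    calc (Real.exp 1 * (2 * Real.pi * s ^ 2 / n)) ^ ((n:ℝ)/2)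
        ≤ ((5 / Real.sqrt n * s) ^ 2) ^ ((n:ℝ)/2) := by
          exact Real.rpow_le_rpow (by positivity) hbase (by positivity)
      _ = (5 / Real.sqrt n * s) ^ n := by
          rw [← Real.rpow_natCast (5 / Real.sqrt n * s) 2, ← Real.rpow_mul hX,
            show ((2:ℕ):ℝ) * ((n:ℝ)/2) = (n:ℝ) by push_cast; ring, Real.rpow_natCast]
  exact (ENNReal.le_ofReal_iff_toReal_le hvol_ne (by positivity)).2 (key.trans hfinal)

lemma borell_ac {n : ℕ} (μ : Measure (Euc n)) [IsProbabilityMeasure μ]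
    (hlc : IsLogConcave μ) (hD0 : essSup (μ.rnDeriv volume) volume ≠ 0)
    (hDt : essSup (μ.rnDeriv volume) volume ≠ ∞) :
    μ ≪ (volume : Measure (Euc n)) := by
  classical
  set D : ℝ≥0∞ := essSup (μ.rnDeriv volume) volume with hD
  set E : ℝ≥0∞ := D / 2 with hE
  have hE0 : E ≠ 0 := by
    simp only [hE, ne_eq, ENNReal.div_eq_zero_iff]
    push_neg
    exact ⟨hD0, by norm_num⟩
  have hEt : E ≠ ∞ := by
    simp only [hE]
    exact (ENNReal.div_lt_top hDt (by norm_num)).ne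
  set M : ℝ≥0∞ := 8 * E with hM
  have hM0 : M ≠ 0 := by simp [hM, hE0]
  have hMt : M ≠ ∞ := ENNReal.mul_ne_top (by norm_num) hEt
  by_contra hac
  obtain ⟨s0, hs0vol, hs0μ⟩ : ∃ s0 : Set (Euc n), volume s0 = 0 ∧ μ s0 ≠ 0 := by
    by_contra h
    push_neg at h
    exact hac (Measure.AbsolutelyContinuous.mk fun s _ hs => h s hs)
  set s : Set (Euc n) := toMeasurable volume s0 with hs_def
  have hsvol : volume s = 0 := by rw [hs_def, measure_toMeasurable]; exact hs0vol
  have hsμ : μ s ≠ 0 := fun h => hs0μ (measure_mono_null (subset_toMeasurable _ _) h)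
  set ν : Measure (Euc n) := M.toNNReal • volume with hν
  have hν_apply : ∀ T : Set (Euc n), ν T = M * volume T := by
    intro T
    rw [hν, Measure.smul_apply, ENNReal.smul_def, smul_eq_mul, ENNReal.coe_toNNReal hMt]
  set v : VitaliFamily μ := Besicovitch.vitaliFamily μ with hv
  have hfreq : ¬ ∀ x ∈ s, ∃ᶠ a in v.filterAt x, μ a ≤ ν a := by
    intro hall
    have hle := v.measure_le_of_frequently_le ν Measure.AbsolutelyContinuous.rfl s hall
    rw [hν_apply, hsvol, mul_zero] at hle
    exact hsμ (le_antisymm hle (zero_le))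
  push_neg at hfreq
  obtain ⟨x₀, hx₀s, hx₀⟩ := hfreq
  have hx₀r : ∀ᶠ r in nhdsWithin (0:ℝ) (Set.Ioi 0),
      M * volume (Metric.closedBall x₀ r) < μ (Metric.closedBall x₀ r) := by
    filter_upwards [(Besicovitch.tendsto_filterAt μ x₀).eventually hx₀] with r hr
    rw [← hν_apply]
    exact hr
  have hBes := Besicovitch.ae_tendsto_rnDeriv μ (volume : Measure (Euc n))
  have hfle : ∀ᵐ y ∂(volume : Measure (Euc n)), μ.rnDeriv volume y ≤ D :=
    ENNReal.ae_le_essSup (μ.rnDeriv volume)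
  set A : Set (Euc n) := {y : Euc n |
    Filter.Tendsto (fun r => μ (Metric.closedBall y r) / volume (Metric.closedBall y r))
      (nhdsWithin (0:ℝ) (Set.Ioi 0)) (nhds (μ.rnDeriv volume y))
    ∧ μ.rnDeriv volume y ≤ D} with hA_def
  have hAae : ∀ᵐ y ∂(volume : Measure (Euc n)), y ∈ A := hBes.and hfle
  have hAc : volume Aᶜ = 0 := by
    have := Filter.eventually_iff.1 hAae
    simpa [MeasureTheory.mem_ae_iff] using this
  have hY' : volume {y : Euc n | E < μ.rnDeriv volume y} ≠ 0 := by
    intro h0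
    have hae2 : ∀ᵐ y ∂(volume : Measure (Euc n)), μ.rnDeriv volume y ≤ E := by
      rw [MeasureTheory.ae_iff]
      simpa [not_le] using h0
    have : D ≤ E := essSup_le_of_ae_le _ hae2
    exact absurd this (not_le.2 (ENNReal.half_lt_self hD0 hDt))
  -- the set of y whose midpoint with x₀ is bad
  set T : Set (Euc n) := (fun y : Euc n => (2:ℝ)⁻¹ • (x₀ + y)) ⁻¹' Aᶜ with hT_def
  have hT : volume T = 0 := by
    have hcomp : T = (fun y : Euc n => x₀ + y) ⁻¹' ((fun z : Euc n => (2:ℝ)⁻¹ • z) ⁻¹' Aᶜ) := by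
      rfl
    rw [hcomp, measure_preimage_add]
    have := Measure.addHaar_preimage_smul (volume : Measure (Euc n))
      (show ((2:ℝ)⁻¹) ≠ 0 by norm_num) Aᶜ
    rw [this, hAc, mul_zero]
  obtain ⟨y, hy⟩ : ({y : Euc n | E < μ.rnDeriv volume y} \ (T ∪ Aᶜ)).Nonempty := by
    apply MeasureTheory.nonempty_of_measure_ne_zero (μ := (volume : Measure (Euc n)))
    rw [measure_diff_null (measure_union_null hT hAc)]
    exact hY'
  obtain ⟨hyE, hyTA⟩ := hy
  have hyA : y ∈ A := by
    by_contra h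
    exact hyTA (Or.inr h)
  have hyT : (2:ℝ)⁻¹ • (x₀ + y) ∈ A := by
    by_contra h
    exact hyTA (Or.inl h)
  set m : Euc n := (2:ℝ)⁻¹ • (x₀ + y) with hm_def
  have hyE' : E < μ.rnDeriv volume y := hyE
  have hyTend := hyA.1
  have hE2 : ∀ᶠ r in nhdsWithin (0:ℝ) (Set.Ioi 0),
      E < μ (Metric.closedBall y r) / volume (Metric.closedBall y r) :=
    hyTend.eventually_const_lt hyE'
  have hlim : ∀ᶠ r in nhdsWithin (0:ℝ) (Set.Ioi 0),
      M ^ ((2:ℝ)⁻¹) * E ^ ((2:ℝ)⁻¹)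
        ≤ μ (Metric.closedBall m r) / volume (Metric.closedBall m r) := by
    filter_upwards [hx₀r, hE2, self_mem_nhdsWithin] with r h1 h2 hr
    have hrpos : (0:ℝ) < r := hr
    set V : ℝ≥0∞ := volume (Metric.closedBall (0 : Euc n) r) with hV_def
    have hVx : volume (Metric.closedBall x₀ r) = V := by
      rw [hV_def, Measure.addHaar_closedBall_center]
    have hVy : volume (Metric.closedBall y r) = V := by
      rw [hV_def, Measure.addHaar_closedBall_center]
    have hVm : volume (Metric.closedBall m r) = V := by
      rw [hV_def, Measure.addHaar_closedBall_center]
    have hV0 : V ≠ 0 := (Metric.measure_closedBall_pos _ _ hrpos).ne'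
    have hVt : V ≠ ∞ := measure_closedBall_lt_top.ne
    -- log-concavity for the two balls
    have hsets : ((2:ℝ)⁻¹) • Metric.closedBall x₀ r + (1 - (2:ℝ)⁻¹) • Metric.closedBall y r
        = Metric.closedBall m r := by
      rw [show (1 - (2:ℝ)⁻¹) = (2:ℝ)⁻¹ by norm_num]
      rw [smul_closedBall _ _ hrpos.le, smul_closedBall _ _ hrpos.le]
      rw [closedBall_add_closedBall (by positivity) (by positivity)]
      have hn2 : ‖(2:ℝ)⁻¹‖ = (2:ℝ)⁻¹ := by rw [Real.norm_eq_abs]; norm_num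
      rw [hn2, hm_def, smul_add, show (2:ℝ)⁻¹ * r + (2:ℝ)⁻¹ * r = r by ring]
    have hlc2 := hlc (Metric.closedBall x₀ r) (Metric.closedBall y r)
      measurableSet_closedBall measurableSet_closedBall ((2:ℝ)⁻¹)
      (by norm_num) (by norm_num)
    rw [hsets] at hlc2
    rw [show (1 - (2:ℝ)⁻¹) = (2:ℝ)⁻¹ by norm_num] at hlc2
    -- lower bounds on the two ball measures
    have hbx : M * V ≤ μ (Metric.closedBall x₀ r) := by
      rw [← hVx]; exact h1.le
    have hby : E * V ≤ μ (Metric.closedBall y r) := by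
      rw [hVy] at h2
      exact ((ENNReal.lt_div_iff_mul_lt (Or.inl hV0) (Or.inl hVt)).1 h2).le
    have hchain : M ^ ((2:ℝ)⁻¹) * E ^ ((2:ℝ)⁻¹) * V ≤ μ (Metric.closedBall m r) := by
      have h1' : (M * V) ^ ((2:ℝ)⁻¹) * (E * V) ^ ((2:ℝ)⁻¹)
          ≤ μ (Metric.closedBall x₀ r) ^ ((2:ℝ)⁻¹) * μ (Metric.closedBall y r) ^ ((2:ℝ)⁻¹) :=
        mul_le_mul' (ENNReal.rpow_le_rpow hbx (by norm_num))
          (ENNReal.rpow_le_rpow hby (by norm_num))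
      have h2' : ∀ a b : ℝ≥0∞, (a * V) ^ ((2:ℝ)⁻¹) * (b * V) ^ ((2:ℝ)⁻¹)
          = a ^ ((2:ℝ)⁻¹) * b ^ ((2:ℝ)⁻¹) * V := by
        intro a b
        rw [ENNReal.mul_rpow_of_nonneg _ _ (by norm_num : (0:ℝ) ≤ (2:ℝ)⁻¹),
          ENNReal.mul_rpow_of_nonneg _ _ (by norm_num : (0:ℝ) ≤ (2:ℝ)⁻¹),
          mul_mul_mul_comm, ← ENNReal.rpow_add _ _ hV0 hVt]
        norm_num
      rw [← h2' M E]
      exact le_trans h1' hlc2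
    rw [hVm]
    rw [ENNReal.le_div_iff_mul_le (Or.inl hV0) (Or.inl hVt)]
    exact hchain
  have hfin : M ^ ((2:ℝ)⁻¹) * E ^ ((2:ℝ)⁻¹) ≤ μ.rnDeriv volume m :=
    ge_of_tendsto hyT.1 hlim
  have hfin2 : M ^ ((2:ℝ)⁻¹) * E ^ ((2:ℝ)⁻¹) ≤ D := le_trans hfin hyT.2
  -- square the inequality
  have hsq : M * E ≤ D * D := by
    have h1' := mul_le_mul' hfin2 hfin2
    have h2' : M ^ ((2:ℝ)⁻¹) * E ^ ((2:ℝ)⁻¹) * (M ^ ((2:ℝ)⁻¹) * E ^ ((2:ℝ)⁻¹))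
        = M * E := by
      rw [show M ^ ((2:ℝ)⁻¹) * E ^ ((2:ℝ)⁻¹) * (M ^ ((2:ℝ)⁻¹) * E ^ ((2:ℝ)⁻¹))
          = (M ^ ((2:ℝ)⁻¹) * M ^ ((2:ℝ)⁻¹)) * (E ^ ((2:ℝ)⁻¹) * E ^ ((2:ℝ)⁻¹)) by ring]
      rw [← ENNReal.rpow_add _ _ hM0 hMt, ← ENNReal.rpow_add _ _ hE0 hEt]
      norm_num
    rw [← h2']
    exact h1'
  have hD2E : D = E * 2 := by
    rw [hE, ENNReal.div_mul_cancel (by norm_num) (by norm_num)]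
  rw [hM, hD2E] at hsq
  have hEE0 : E * E ≠ 0 := mul_ne_zero hE0 hE0
  have hEEt : E * E ≠ ∞ := ENNReal.mul_ne_top hEt hEt
  have hc1 : (8:ℝ≥0∞) * (E * E) ≤ 4 * (E * E) := by
    calc (8:ℝ≥0∞) * (E * E) = 8 * E * E := by ring
    _ ≤ E * 2 * (E * 2) := hsq
    _ = 4 * (E * E) := by ring
  have : (8:ℝ≥0∞) ≤ 4 := (ENNReal.mul_le_mul_iff_left hEE0 hEEt).1 hc1
  norm_num at this

lemma main_lintegral_bound {n : ℕ} (μ : Measure (Euc n)) [IsProbabilityMeasure μ]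
    {p : ℝ} (hp1 : 1 ≤ p) (hpn : p ≤ (n:ℝ) - 1) {Dr : ℝ} (hDr : 0 < Dr)
    (hball : ∀ s : ℝ, 0 < s →
      μ (Metric.closedBall (0 : Euc n) s) ≤ ENNReal.ofReal (Dr * (5 / Real.sqrt n * s) ^ n)) :
    ∫⁻ x, ENNReal.ofReal (‖x‖ ^ (-p)) ∂μ
      ≤ ENNReal.ofReal ((8 * (5 / Real.sqrt n) * Dr ^ ((n:ℝ)⁻¹)) ^ p) := by
  have hn1 : (2:ℝ) ≤ (n:ℝ) := by linarith
  have hrn : (0:ℝ) < n := by linarith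
  have hn0 : (n:ℝ) ≠ 0 := ne_of_gt hrn
  have hppos : 0 < p := lt_of_lt_of_le one_pos hp1
  set K : ℝ := 5 / Real.sqrt n with hK
  have hKpos : 0 < K := by
    have : (0:ℝ) < Real.sqrt n := Real.sqrt_pos.2 hrn
    positivity
  set s₀ : ℝ := Dr ^ (-(n:ℝ)⁻¹) / K with hs₀_def
  have hs₀ : 0 < s₀ := by
    have : (0:ℝ) < Dr ^ (-(n:ℝ)⁻¹) := Real.rpow_pos_of_pos hDr _
    positivity
  have hDK : Dr * (K * s₀) ^ n = 1 := by
    have h1 : K * s₀ = Dr ^ (-(n:ℝ)⁻¹) := by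
      rw [hs₀_def]; field_simp
    rw [h1, ← Real.rpow_natCast (Dr ^ (-(n:ℝ)⁻¹)) n, ← Real.rpow_mul hDr.le]
    rw [show -(n:ℝ)⁻¹ * n = -1 by field_simp]
    rw [Real.rpow_neg_one, mul_inv_cancel₀ hDr.ne']
  set ρ : ℕ → ℝ := fun k => s₀ * (2:ℝ) ^ (-(k:ℝ)) with hρ
  have hρpos : ∀ k, 0 < ρ k := fun k => by
    have : (0:ℝ) < (2:ℝ) ^ (-(k:ℝ)) := Real.rpow_pos_of_pos (by norm_num) _
    positivity
  have hρ0 : ρ 0 = s₀ := by simp [hρ]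
  set F : ℕ → Set (Euc n) := fun k =>
    match k with
    | 0 => {0}
    | 1 => {x : Euc n | s₀ < ‖x‖}
    | (k+2) => {x : Euc n | ‖x‖ ∈ Set.Ioc (ρ (k+1)) (ρ k)} with hF
  have hcover : (Set.univ : Set (Euc n)) ⊆ ⋃ k, F k := by
    intro x _
    rcases eq_or_ne x 0 with rfl | hx0
    · exact Set.mem_iUnion.2 ⟨0, rfl⟩
    rcases lt_or_ge s₀ ‖x‖ with hxs | hxs
    · exact Set.mem_iUnion.2 ⟨1, hxs⟩
    have hxn : 0 < ‖x‖ := norm_pos_iff.2 hx0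
    have hex : ∃ j : ℕ, ρ (j+1) < ‖x‖ := by
      obtain ⟨N, hN⟩ := exists_nat_gt (s₀ / ‖x‖)
      refine ⟨N, ?_⟩
      have h2N : (s₀ / ‖x‖) < (2:ℝ) ^ ((N:ℝ) + 1) := by
        have hN2 : (N:ℝ) < (2:ℝ) ^ (N:ℝ) := by
          rw [Real.rpow_natCast]
          exact_mod_cast (Nat.lt_two_pow_self (n := N))
        have h1le : (2:ℝ) ^ (N:ℝ) ≤ (2:ℝ) ^ ((N:ℝ)+1) :=
          Real.rpow_le_rpow_of_exponent_le (by norm_num) (by linarith)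
        linarith
      have : ρ (N+1) = s₀ / (2:ℝ) ^ ((N:ℝ)+1) := by
        simp only [hρ]
        rw [show (-(((N+1):ℕ):ℝ)) = -((N:ℝ)+1) by push_cast; ring]
        rw [Real.rpow_neg (by norm_num)]
        ring
      rw [this, div_lt_iff₀ (Real.rpow_pos_of_pos (by norm_num) _)]
      rw [div_lt_iff₀ hxn] at h2N
      linarith [h2N]
    set j := Nat.find hex with hj
    have hjlt : ρ (j+1) < ‖x‖ := Nat.find_spec hex
    have hjle : ‖x‖ ≤ ρ j := by
      rcases Nat.eq_zero_or_pos j with hj0 | hjpos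
      · rw [hj0, hρ0]; exact hxs
      · obtain ⟨i, hji⟩ : ∃ i, j = i + 1 := ⟨j - 1, (Nat.succ_pred_eq_of_pos hjpos).symm⟩
        have hmin := Nat.find_min hex (show i < j by omega)
        rw [hji]
        exact not_lt.1 hmin
    exact Set.mem_iUnion.2 ⟨j+2, ⟨hjlt, hjle⟩⟩
  set f : Euc n → ℝ≥0∞ := fun x => ENNReal.ofReal (‖x‖ ^ (-p)) with hf
  set A : ℝ≥0∞ := ENNReal.ofReal (s₀ ^ (-p)) with hA
  set C : ℝ≥0∞ := ENNReal.ofReal (s₀ ^ (-p) * 2 ^ p) with hC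
  set Q : ℝ≥0∞ := ENNReal.ofReal ((2:ℝ) ^ (p - (n:ℝ))) with hQ
  have hbound : ∀ (S : Set (Euc n)), MeasurableSet S → ∀ c : ℝ≥0∞,
      (∀ x ∈ S, f x ≤ c) → ∫⁻ x in S, f x ∂μ ≤ c * μ S := by
    intro S hS c hc
    calc ∫⁻ x in S, f x ∂μ ≤ ∫⁻ _x in S, c ∂μ := setLIntegral_mono' hS hc
    _ = c * μ S := setLIntegral_const S c
  have hterm0 : ∫⁻ x in F 0, f x ∂μ ≤ 0 := by
    have h0 : ∀ x ∈ F 0, f x ≤ 0 := by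
      intro x hx
      have hx0 : x = (0 : Euc n) := hx
      rw [hf, hx0]
      simp only [norm_zero]
      rw [Real.zero_rpow (neg_ne_zero.2 hppos.ne')]
      simp
    have := hbound (F 0) (measurableSet_singleton 0) 0 h0
    simpa using this
  have hterm1 : ∫⁻ x in F 1, f x ∂μ ≤ A := by
    have hmeas : MeasurableSet (F 1) := measurable_norm measurableSet_Ioi
    have h1 : ∀ x ∈ F 1, f x ≤ A := by
      intro x hx
      have hx' : s₀ < ‖x‖ := hx
      exact ENNReal.ofReal_le_ofReal
        (Real.rpow_le_rpow_of_nonpos hs₀ hx'.le (neg_nonpos.2 hppos.le))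
    calc ∫⁻ x in F 1, f x ∂μ ≤ A * μ (F 1) := hbound _ hmeas _ h1
    _ ≤ A * 1 := mul_le_mul_right prob_le_one _
    _ = A := mul_one _
  have htermk : ∀ k : ℕ, ∫⁻ x in F (k+2), f x ∂μ ≤ C * Q ^ k := by
    intro k
    have hmeas : MeasurableSet (F (k+2)) := measurable_norm measurableSet_Ioc
    have hck : ∀ x ∈ F (k+2), f x ≤ ENNReal.ofReal ((ρ (k+1)) ^ (-p)) := by
      intro x hx
      have hx' : ρ (k+1) < ‖x‖ := hx.1
      exact ENNReal.ofReal_le_ofReal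
        (Real.rpow_le_rpow_of_nonpos (hρpos _) hx'.le (neg_nonpos.2 hppos.le))
    have hμF : μ (F (k+2)) ≤ ENNReal.ofReal (Dr * (K * ρ k) ^ n) := by
      refine le_trans (measure_mono ?_) (hball (ρ k) (hρpos k))
      intro x hx
      rw [Metric.mem_closedBall, dist_zero_right]
      exact hx.2
    have hreal : (ρ (k+1)) ^ (-p) * (Dr * (K * ρ k) ^ n)
        = (s₀ ^ (-p) * 2 ^ p) * ((2:ℝ) ^ (p - (n:ℝ))) ^ k := by
      have h2pos : (0:ℝ) < 2 := by norm_num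
      have hvol : Dr * (K * ρ k) ^ n = (2:ℝ) ^ (-(k:ℝ) * n) := by
        have : K * ρ k = (K * s₀) * (2:ℝ) ^ (-(k:ℝ)) := by rw [hρ]; ring
        rw [this, mul_pow, ← mul_assoc, hDK, one_mul,
          ← Real.rpow_natCast ((2:ℝ) ^ (-(k:ℝ))) n, ← Real.rpow_mul h2pos.le]
      have hrad : (ρ (k+1)) ^ (-p) = s₀ ^ (-p) * (2:ℝ) ^ (((k:ℝ)+1) * p) := by
        have hcast : (-(((k+1):ℕ)):ℝ) = -((k:ℝ)+1) := by push_cast; ring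
        have : ρ (k+1) = s₀ * (2:ℝ) ^ (-((k:ℝ)+1)) := by
          simp only [hρ]
          rw [show (-(((k+1):ℕ):ℝ)) = -((k:ℝ)+1) by push_cast; ring]
        rw [this, Real.mul_rpow hs₀.le (Real.rpow_pos_of_pos h2pos _).le,
          ← Real.rpow_mul h2pos.le]
        congr 2
        ring
      rw [hrad, hvol, mul_assoc, ← Real.rpow_add h2pos, ← Real.rpow_natCast
        ((2:ℝ) ^ (p - (n:ℝ))) k, ← Real.rpow_mul h2pos.le, mul_assoc, ← Real.rpow_add h2pos]
      congr 2
      ring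
    calc ∫⁻ x in F (k+2), f x ∂μ
        ≤ ENNReal.ofReal ((ρ (k+1)) ^ (-p)) * μ (F (k+2)) := hbound _ hmeas _ hck
      _ ≤ ENNReal.ofReal ((ρ (k+1)) ^ (-p)) * ENNReal.ofReal (Dr * (K * ρ k) ^ n) :=
          mul_le_mul_right hμF _
      _ = ENNReal.ofReal ((ρ (k+1)) ^ (-p) * (Dr * (K * ρ k) ^ n)) :=
          (ENNReal.ofReal_mul (Real.rpow_nonneg (hρpos _).le _)).symm
      _ = ENNReal.ofReal ((s₀ ^ (-p) * 2 ^ p) * ((2:ℝ) ^ (p - (n:ℝ))) ^ k) := by rw [hreal]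
      _ = C * Q ^ k := by
          rw [ENNReal.ofReal_mul (by positivity), hC, hQ,
            ENNReal.ofReal_pow (by positivity)]
  have hQle : Q ≤ 2⁻¹ := by
    rw [hQ, show ((2:ℝ≥0∞))⁻¹ = ENNReal.ofReal (2⁻¹) by
      rw [ENNReal.ofReal_inv_of_pos (by norm_num), ENNReal.ofReal_ofNat]]
    apply ENNReal.ofReal_le_ofReal
    rw [show ((2:ℝ))⁻¹ = (2:ℝ) ^ (-1:ℝ) by rw [Real.rpow_neg_one]]
    exact Real.rpow_le_rpow_of_exponent_le (by norm_num) (by linarith)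
  have hgeom : ∑' k : ℕ, C * Q ^ k ≤ C * 2 := by
    rw [ENNReal.tsum_mul_left, ENNReal.tsum_geometric]
    apply mul_le_mul_right
    rw [show ((2:ℝ≥0∞)) = (2⁻¹)⁻¹ by simp]
    apply ENNReal.inv_le_inv'
    calc (2:ℝ≥0∞)⁻¹ = 1 - 2⁻¹ := ENNReal.one_sub_inv_two.symm
    _ ≤ 1 - Q := tsub_le_tsub le_rfl hQle
  have htotal : ∫⁻ x, f x ∂μ ≤ A + C * 2 := by
    calc ∫⁻ x, f x ∂μ = ∫⁻ x in Set.univ, f x ∂μ := (setLIntegral_univ _).symm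
      _ ≤ ∫⁻ x in ⋃ k, F k, f x ∂μ := lintegral_mono_set hcover
      _ ≤ ∑' k, ∫⁻ x in F k, f x ∂μ := lintegral_iUnion_le _ _
      _ = (∫⁻ x in F 0, f x ∂μ) + ((∫⁻ x in F 1, f x ∂μ)
            + ∑' k, ∫⁻ x in F (k+2), f x ∂μ) := by
          rw [tsum_eq_zero_add' ENNReal.summable]
          congr 1
          rw [tsum_eq_zero_add' ENNReal.summable]
      _ ≤ 0 + (A + C * 2) := by
          refine add_le_add hterm0 (add_le_add hterm1 ?_)
          exact le_trans (ENNReal.tsum_le_tsum htermk) hgeom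
      _ = A + C * 2 := by rw [zero_add]
  refine le_trans htotal ?_
  have hACreal : s₀ ^ (-p) + s₀ ^ (-p) * 2 ^ p * 2 ≤ (8 * K * Dr ^ ((n:ℝ)⁻¹)) ^ p := by
    have h8 : (8 * K * Dr ^ ((n:ℝ)⁻¹)) = 8 / s₀ := by
      rw [hs₀_def, Real.rpow_neg hDr.le]
      field_simp
    rw [h8]
    have hdiv : ((8:ℝ) / s₀) ^ p = 8 ^ p * s₀ ^ (-p) := by
      rw [div_eq_mul_inv, Real.mul_rpow (by norm_num) (by positivity),
        ← Real.rpow_neg_one s₀, ← Real.rpow_mul hs₀.le]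
      norm_num
    rw [hdiv]
    have hkey : 1 + 2 ^ p * 2 ≤ (8:ℝ) ^ p := by
      have h84 : (8:ℝ) ^ p = 2 ^ p * 4 ^ p := by
        rw [← Real.mul_rpow (by norm_num) (by norm_num)]
        norm_num
      have h4 : (4:ℝ) ≤ 4 ^ p := by
        calc (4:ℝ) = 4 ^ (1:ℝ) := (Real.rpow_one _).symm
        _ ≤ 4 ^ p := Real.rpow_le_rpow_of_exponent_le (by norm_num) hp1
      have h2 : (2:ℝ) ≤ 2 ^ p := by
        calc (2:ℝ) = 2 ^ (1:ℝ) := (Real.rpow_one _).symm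
        _ ≤ 2 ^ p := Real.rpow_le_rpow_of_exponent_le (by norm_num) hp1
      nlinarith [Real.rpow_pos_of_pos (show (0:ℝ) < 2 by norm_num) p]
    have hs0p : (0:ℝ) < s₀ ^ (-p) := Real.rpow_pos_of_pos hs₀ _
    nlinarith [mul_le_mul_of_nonneg_right hkey hs0p.le]
  have hsum : ENNReal.ofReal (s₀ ^ (-p) + s₀ ^ (-p) * 2 ^ p * 2) = A + C * 2 := by
    rw [ENNReal.ofReal_add (by positivity) (by positivity),
      ENNReal.ofReal_mul (by positivity), hA, hC]
    simp
  calc A + C * 2 = ENNReal.ofReal (s₀ ^ (-p) + s₀ ^ (-p) * 2 ^ p * 2) := hsum.symm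
    _ ≤ ENNReal.ofReal ((8 * K * Dr ^ ((n:ℝ)⁻¹)) ^ p) := ENNReal.ofReal_le_ofReal hACreal
    _ = ENNReal.ofReal ((8 * (5 / Real.sqrt n) * Dr ^ ((n:ℝ)⁻¹)) ^ p) := by rw [hK]



/-- `I_{−p}(μ) ≥ c·√n/‖μ‖_∞^{1/n}` for centered log-concave probability
measures and real `1 ≤ p ≤ n−1`; in particular `I_{−p}(μ) ≥ c·√n/L_μ` for isotropic μ. -/
theorem stmt14 :
    ∃ c : ℝ, 0 < c ∧
      ∀ (n : ℕ) (μ : Measure (Euc n)), IsProbabilityMeasure μ → IsCenteredM μ →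
        IsLogConcave μ →
        ∀ p : ℝ, 1 ≤ p → p ≤ (n : ℝ) - 1 →
          c * Real.sqrt n / (densitySup μ).toReal ^ ((n : ℝ)⁻¹) ≤ Iq μ (-p) ∧
          (IsIsotropicLC μ → c * Real.sqrt n / isoConst μ ≤ Iq μ (-p)) := by
  refine ⟨(40:ℝ)⁻¹, by norm_num, ?_⟩
  intro n μ hprob _hcent hlc p hp1 hpn
  haveI := hprob
  have key : (40:ℝ)⁻¹ * Real.sqrt n / (densitySup μ).toReal ^ ((n : ℝ)⁻¹) ≤ Iq μ (-p) := by
    have hn2 : (2:ℝ) ≤ (n:ℝ) := by linarith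
    have hrn : (0:ℝ) < (n:ℝ) := by linarith
    have hn0 : (n:ℝ) ≠ 0 := ne_of_gt hrn
    have hnn : 0 < n := by exact_mod_cast hrn
    have hppos : (0:ℝ) < p := lt_of_lt_of_le one_pos hp1
    have hsqn : (0:ℝ) < Real.sqrt n := Real.sqrt_pos.2 hrn
    have hIqnonneg : 0 ≤ Iq μ (-p) :=
      Real.rpow_nonneg (integral_nonneg fun x => Real.rpow_nonneg (norm_nonneg x) _) _
    by_cases hD0 : densitySup μ = 0
    · rw [hD0]
      simp only [ENNReal.toReal_zero]
      rw [Real.zero_rpow (inv_ne_zero hn0), div_zero]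
      exact hIqnonneg
    by_cases hDt : densitySup μ = ∞
    · rw [hDt]
      simp only [ENNReal.toReal_top]
      rw [Real.zero_rpow (inv_ne_zero hn0), div_zero]
      exact hIqnonneg
    have hac : μ ≪ (volume : Measure (Euc n)) := borell_ac μ hlc hD0 hDt
    set Dr : ℝ := (densitySup μ).toReal with hDr_def
    have hDrpos : 0 < Dr := ENNReal.toReal_pos hD0 hDt
    have hDinf_eq : densitySup μ = ENNReal.ofReal Dr := (ENNReal.ofReal_toReal hDt).symm
    have hball : ∀ s : ℝ, 0 < s →
        μ (Metric.closedBall (0 : Euc n) s)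
          ≤ ENNReal.ofReal (Dr * (5 / Real.sqrt n * s) ^ n) := by
      intro s hs
      have h1 : μ (Metric.closedBall (0 : Euc n) s)
          = ∫⁻ x in Metric.closedBall (0 : Euc n) s, μ.rnDeriv volume x ∂volume := by
        conv_lhs => rw [← Measure.withDensity_rnDeriv_eq μ volume hac]
        rw [withDensity_apply _ measurableSet_closedBall]
      rw [h1]
      have hle : ∀ᵐ x ∂(volume : Measure (Euc n)), μ.rnDeriv volume x ≤ densitySup μ :=
        ENNReal.ae_le_essSup (μ.rnDeriv volume)
      calc ∫⁻ x in Metric.closedBall (0 : Euc n) s, μ.rnDeriv volume x ∂volume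
          ≤ ∫⁻ _x in Metric.closedBall (0 : Euc n) s, densitySup μ ∂volume :=
            lintegral_mono_ae (ae_restrict_of_ae hle)
        _ = densitySup μ * volume (Metric.closedBall (0 : Euc n) s) :=
            setLIntegral_const _ _
        _ ≤ ENNReal.ofReal Dr * ENNReal.ofReal ((5 / Real.sqrt n * s) ^ n) :=
            mul_le_mul' (le_of_eq hDinf_eq) (euc_ball_vol hnn hs)
        _ = ENNReal.ofReal (Dr * (5 / Real.sqrt n * s) ^ n) :=
            (ENNReal.ofReal_mul hDrpos.le).symm
    have hlint := main_lintegral_bound μ hp1 hpn hDrpos hball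
    set B : ℝ := 8 * (5 / Real.sqrt n) * Dr ^ ((n:ℝ)⁻¹) with hB
    have hBpos : 0 < B := by positivity
    have hmeas : Measurable (fun x : Euc n => ‖x‖ ^ (-p)) :=
      measurable_norm.pow_const _
    have hnonneg : ∀ x : Euc n, 0 ≤ ‖x‖ ^ (-p) := fun x => Real.rpow_nonneg (norm_nonneg x) _
    have hInt : Integrable (fun x : Euc n => ‖x‖ ^ (-p)) μ := by
      refine ⟨hmeas.aestronglyMeasurable, ?_⟩
      rw [hasFiniteIntegral_iff_ofReal (Filter.Eventually.of_forall hnonneg)]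
      exact lt_of_le_of_lt hlint ENNReal.ofReal_lt_top
    have hval : ENNReal.ofReal (∫ x, ‖x‖ ^ (-p) ∂μ) = ∫⁻ x, ENNReal.ofReal (‖x‖ ^ (-p)) ∂μ :=
      ofReal_integral_eq_lintegral_ofReal hInt (Filter.Eventually.of_forall hnonneg)
    have hpos_l : 0 < ∫⁻ x, ENNReal.ofReal (‖x‖ ^ (-p)) ∂μ := by
      rw [lintegral_pos_iff_support hmeas.ennreal_ofReal]
      have hsupp : ({(0:Euc n)}ᶜ : Set (Euc n))
          ⊆ Function.support (fun x => ENNReal.ofReal (‖x‖ ^ (-p))) := by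
        intro x hx
        have hxne : x ≠ 0 := hx
        have hxn : 0 < ‖x‖ := norm_pos_iff.2 hxne
        have hpos : 0 < ‖x‖ ^ (-p) := Real.rpow_pos_of_pos hxn _
        simp only [Function.mem_support, ne_eq, ENNReal.ofReal_eq_zero, not_le]
        exact hpos
      haveI : Nontrivial (Euc n) := by
        apply Module.nontrivial_of_finrank_pos (R := ℝ)
        rw [finrank_euclideanSpace_fin]
        exact hnn
      have h0 : μ {(0:Euc n)} = 0 := hac (measure_singleton _)
      have hcompl : μ ({(0:Euc n)}ᶜ) = 1 := by
        rw [measure_compl (measurableSet_singleton _) (measure_ne_top μ _), h0, measure_univ]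
        simp
      calc (0:ℝ≥0∞) < 1 := by norm_num
        _ = μ ({(0:Euc n)}ᶜ) := hcompl.symm
        _ ≤ μ (Function.support (fun x => ENNReal.ofReal (‖x‖ ^ (-p)))) := measure_mono hsupp
    have hIpos : 0 < ∫ x, ‖x‖ ^ (-p) ∂μ := by
      rw [← hval] at hpos_l
      exact ENNReal.ofReal_pos.1 hpos_l
    have hIle : ∫ x, ‖x‖ ^ (-p) ∂μ ≤ B ^ p := by
      have h2 : ENNReal.ofReal (∫ x, ‖x‖ ^ (-p) ∂μ) ≤ ENNReal.ofReal (B ^ p) := by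
        rw [hval]; exact hlint
      exact (ENNReal.ofReal_le_ofReal_iff (by positivity)).1 h2
    have hexp_neg : (-p)⁻¹ ≤ 0 := by
      rw [inv_nonpos]
      linarith
    have hmono : (B ^ p) ^ (-p)⁻¹ ≤ (∫ x, ‖x‖ ^ (-p) ∂μ) ^ (-p)⁻¹ :=
      Real.rpow_le_rpow_of_nonpos hIpos hIle hexp_neg
    have hBp : (B ^ p) ^ (-p)⁻¹ = B⁻¹ := by
      rw [← Real.rpow_mul hBpos.le]
      rw [show p * (-p)⁻¹ = -1 by rw [inv_neg]; field_simp]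
      exact Real.rpow_neg_one B
    have hBinv : B⁻¹ = (40:ℝ)⁻¹ * Real.sqrt n / Dr ^ ((n:ℝ)⁻¹) := by
      have hDrp : (0:ℝ) < Dr ^ ((n:ℝ)⁻¹) := Real.rpow_pos_of_pos hDrpos _
      rw [hB]
      field_simp
      norm_num
    calc (40:ℝ)⁻¹ * Real.sqrt n / Dr ^ ((n:ℝ)⁻¹) = B⁻¹ := hBinv.symm
      _ = (B ^ p) ^ (-p)⁻¹ := hBp.symm
      _ ≤ (∫ x, ‖x‖ ^ (-p) ∂μ) ^ (-p)⁻¹ := hmono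
      _ = Iq μ (-p) := rfl
  exact ⟨key, fun _ => key⟩

end
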